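/- For every positive integer n, r_{3,1}(n) = ⌊(d(2n² + 1) - 1)/2⌋. -/

import Mathlib

/-- The `c`-th `m`-gonal number: `P(m,c) = c((m-2)c - (m-4))/2`. -/
def polygonal (m c : ℤ) : ℤ := c * ((m - 2) * c - (m - 4)) / 2

/-- `r_{m,t}(n)`: the number of unordered pairs `{a,b}` of positive integers with
`a + b = n` such that `ab = t·P(m,c)` for some `c`, where `c` ranges over positive
integers if `m = 3` or `m = 4`, and over all integers if `m > 4`. -/
noncomputable def rmt (m t n : ℕ) : ℕ :=
  Set.ncard {p : ℕ × ℕ | 0 < p.1 ∧ p.1 ≤ p.2 ∧ p.1 + p.2 = n ∧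
    ∃ c : ℤ, ((m = 3 ∨ m = 4) → 0 < c) ∧ (p.1 : ℤ) * p.2 = t * polygonal m c}

/-- `r'_{m,t}(n)`: the number of pairs `(x,y)` of nonnegative integers with
`2(m-2)n² + t(m-4)² = 2(m-2)x² + t y²`. -/
noncomputable def rmt' (m t n : ℕ) : ℕ :=
  Set.ncard {p : ℕ × ℕ |
    2 * ((m : ℤ) - 2) * (n : ℤ) ^ 2 + t * ((m : ℤ) - 4) ^ 2 =
    2 * ((m : ℤ) - 2) * (p.1 : ℤ) ^ 2 + t * (p.2 : ℤ) ^ 2}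

/-- `d_A(n)`: the number of positive divisors of `n` not divisible by any prime in `A`.
Equivalently, `∏_{p prime, p ∉ A} (1 + ord_p(n))`. -/
def dA (A : Finset ℕ) (n : ℕ) : ℕ :=
  (n.divisors.filter (fun d => ∀ p ∈ A, ¬ p ∣ d)).card



open Zsqrtd

local notation "R2" => Zsqrtd (-2)

namespace Z2

theorem norm_def' (z : R2) : z.norm = z.re * z.re + 2 * (z.im * z.im) := by
  rw [Zsqrtd.norm_def]; ring

theorem norm_nonneg' (z : R2) : 0 ≤ z.norm := Zsqrtd.norm_nonneg (by norm_num) z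

theorem norm_eq_zero' {z : R2} : z.norm = 0 ↔ z = 0 := Zsqrtd.norm_eq_zero_iff (by norm_num) z

theorem norm_pos {z : R2} (hz : z ≠ 0) : 0 < z.norm := by
  rcases lt_or_eq_of_le (norm_nonneg' z) with h | h
  · exact h
  · exact absurd (norm_eq_zero'.1 h.symm) hz

noncomputable instance : Div R2 :=
  ⟨fun x y => ⟨round (((x * star y).re : ℚ) / (y.norm : ℚ)),
               round (((x * star y).im : ℚ) / (y.norm : ℚ))⟩⟩

theorem div_def (x y : R2) : x / y = ⟨round (((x * star y).re : ℚ) / (y.norm : ℚ)),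
    round (((x * star y).im : ℚ) / (y.norm : ℚ))⟩ := rfl

noncomputable instance : Mod R2 := ⟨fun x y => x - y * (x / y)⟩

theorem mod_def (x y : R2) : x % y = x - y * (x / y) := rfl

theorem round_den_bound (t N : ℤ) (hN : 0 < N) :
    2 * |t - round ((t : ℚ) / (N : ℚ)) * N| ≤ N := by
  have hN' : (0 : ℚ) < (N : ℚ) := by exact_mod_cast hN
  have h1 : |(t : ℚ) / N - round ((t : ℚ) / N)| ≤ 1 / 2 := abs_sub_round _
  set c : ℤ := round ((t : ℚ) / (N : ℚ)) with hc
  have h3 : (t : ℚ) - c * N = ((t : ℚ) / N - c) * N := by field_simp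
  have h2 : |(t : ℚ) - c * N| ≤ (N : ℚ) / 2 := by
    rw [h3, abs_mul, abs_of_pos hN']
    have := mul_le_mul_of_nonneg_right h1 hN'.le
    linarith
  have h4 : (2 : ℚ) * |((t - c * N : ℤ) : ℚ)| ≤ (N : ℚ) := by push_cast; linarith
  exact_mod_cast h4

theorem norm_mod_lt (x : R2) {y : R2} (hy : y ≠ 0) : (x % y).norm < y.norm := by
  have hN : 0 < y.norm := norm_pos hy
  set q := x / y with hq
  set r := x % y with hr
  have hry : r * star y = ⟨(x * star y).re - q.re * y.norm, (x * star y).im - q.im * y.norm⟩ := by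
    have h1 : r * star y = x * star y - q * (y * star y) := by
      rw [hr, mod_def]; ring
    have h2 : y * star y = (y.norm : R2) := by rw [Zsqrtd.norm_eq_mul_conj]
    rw [h1, h2]
    ext <;> simp [Zsqrtd.re_mul, Zsqrtd.im_mul, mul_comm]
  set a := (x * star y).re - q.re * y.norm with hA
  set b := (x * star y).im - q.im * y.norm with hB
  have hqre : q.re = round (((x * star y).re : ℚ) / (y.norm : ℚ)) := rfl
  have hqim : q.im = round (((x * star y).im : ℚ) / (y.norm : ℚ)) := rfl
  have ha' : 2 * |a| ≤ y.norm := by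
    rw [hA, hqre]; exact round_den_bound (x * star y).re y.norm hN
  have hb' : 2 * |b| ≤ y.norm := by
    rw [hB, hqim]; exact round_den_bound (x * star y).im y.norm hN
  have hnormmul : (r * star y).norm = r.norm * y.norm := by
    rw [Zsqrtd.norm_mul, Zsqrtd.norm_conj]
  have h3 : r.norm * y.norm = a * a + 2 * (b * b) := by
    rw [← hnormmul, hry]
    simp [norm_def']
  have h4 : (2*|a|) * (2*|a|) ≤ y.norm * y.norm := mul_self_le_mul_self (by positivity) ha'
  have h5 : (2*|b|) * (2*|b|) ≤ y.norm * y.norm := mul_self_le_mul_self (by positivity) hb'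
  have h6 : 4 * (a*a) ≤ y.norm * y.norm := by nlinarith [abs_mul_abs_self a]
  have h7 : 4 * (b*b) ≤ y.norm * y.norm := by nlinarith [abs_mul_abs_self b]
  nlinarith [h3, h6, h7, hN]

theorem natAbs_norm_mod_lt (x : R2) {y : R2} (hy : y ≠ 0) :
    (x % y).norm.natAbs < y.norm.natAbs := by
  have := norm_mod_lt x hy
  have h1 := norm_nonneg' (x % y)
  have h2 := norm_nonneg' y
  omega

instance : Nontrivial R2 := ⟨⟨0, 1, by decide⟩⟩

theorem natAbs_norm_pos {z : R2} (hz : z ≠ 0) : 0 < z.norm.natAbs := by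
  have := norm_pos hz; omega

noncomputable instance : EuclideanDomain R2 :=
  { Zsqrtd.commRing, (inferInstance : Nontrivial R2) with
    quotient := (· / ·)
    remainder := (· % ·)
    quotient_zero := fun x => by ext <;> simp [div_def]
    quotient_mul_add_remainder_eq := fun x y => by
      show y * (x / y) + x % y = x
      rw [mod_def]; ring
    r := fun a b => a.norm.natAbs < b.norm.natAbs
    r_wellFounded := (measure (Int.natAbs ∘ Zsqrtd.norm)).wf
    remainder_lt := fun a b hb => natAbs_norm_mod_lt a hb
    mul_left_not_lt := fun a b hb0 => by
      show ¬ (a * b).norm.natAbs < a.norm.natAbs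
      rw [not_lt, Zsqrtd.norm_mul, Int.natAbs_mul]
      exact le_mul_of_one_le_right (Nat.zero_le _) (natAbs_norm_pos hb0) }

end Z2

set_option synthInstance.maxHeartbeats 1000000 in
instance : DecompositionMonoid (Zsqrtd (-2)) := inferInstance

namespace Z2

theorem unit_eq {u : R2} (h : IsUnit u) : u = 1 ∨ u = -1 := by
  have h2 : u.norm = 1 := (Zsqrtd.norm_eq_one_iff' (by norm_num) u).2 h
  rw [norm_def'] at h2
  have him : u.im * u.im = 0 := by nlinarith [mul_self_nonneg u.re, mul_self_nonneg u.im]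
  have him0 : u.im = 0 := by nlinarith [mul_self_nonneg u.im]
  have hre : u.re = 1 ∨ u.re = -1 := by
    rw [him0] at h2
    simp at h2
    exact mul_self_eq_one_iff.1 h2
  rcases hre with h | h
  · left; ext <;> simp [h, him0]
  · right; ext <;> simp [h, him0]

theorem eq_or_neg_of_associated {x y : R2} (h : Associated x y) : y = x ∨ y = -x := by
  obtain ⟨u, hu⟩ := h
  rcases unit_eq u.isUnit with h1 | h1 <;> rw [← hu, h1]
  · left; ring
  · right; ring

theorem dvd_norm {g z : R2} (h : g ∣ z) : g.norm ∣ z.norm := by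
  obtain ⟨c, rfl⟩ := h
  exact ⟨c.norm, Zsqrtd.norm_mul g c⟩

section Main

variable {n : ℕ}

def alpha (n : ℕ) : R2 := ⟨1, (n : ℤ)⟩

theorem norm_alpha (n : ℕ) : (alpha n).norm = 2 * (n : ℤ) ^ 2 + 1 := by
  rw [norm_def']; simp [alpha]; ring

theorem alpha_ne_zero : alpha n ≠ 0 := fun h => by
  have : (alpha n).re = 1 := rfl
  rw [h] at this
  simp at this

theorem isCoprime_alpha (hn : 0 < n) : IsCoprime (alpha n) (star (alpha n)) := by
  classical
  set α := alpha n
  have hgu : IsUnit (EuclideanDomain.gcd α (star α)) := by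
    set g := EuclideanDomain.gcd α (star α) with hg
    have h1 : g ∣ α := EuclideanDomain.gcd_dvd_left _ _
    have h2 : g ∣ star α := EuclideanDomain.gcd_dvd_right _ _
    have h3 : g ∣ α + star α := dvd_add h1 h2
    have h4 : α + star α = (2 : R2) := by ext <;> simp [α, alpha]
    have h5 : g.norm ∣ (2 : R2).norm := dvd_norm (h4 ▸ h3)
    have h6 : g.norm ∣ 2 * (n : ℤ) ^ 2 + 1 := norm_alpha n ▸ dvd_norm h1
    have h7 : (2 : R2).norm = 4 := by rw [norm_def']; simp
    rw [h7] at h5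
    have h8 : g.norm.natAbs ∣ 4 := by
      have := Int.natAbs_dvd_natAbs.2 h5; simpa using this
    have h9 : g.norm.natAbs ∣ 2 * n ^ 2 + 1 := by
      have e : ((2 * n ^ 2 + 1 : ℕ) : ℤ) = 2 * (n : ℤ) ^ 2 + 1 := by push_cast; ring
      have h6' : g.norm ∣ ((2 * n ^ 2 + 1 : ℕ) : ℤ) := by rw [e]; exact h6
      have := Int.natAbs_dvd_natAbs.2 h6'
      rwa [Int.natAbs_natCast] at this
    have h10 : g.norm.natAbs = 1 := by
      set m := g.norm.natAbs
      set t := n ^ 2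
      have hm4 : m ≤ 4 := Nat.le_of_dvd (by norm_num) h8
      interval_cases m <;> omega
    exact Zsqrtd.norm_eq_one_iff.1 h10
  obtain ⟨u, hu⟩ := hgu
  have hb := EuclideanDomain.gcd_eq_gcd_ab α (star α)
  refine ⟨(↑u⁻¹ : R2) * EuclideanDomain.gcdA α (star α),
          (↑u⁻¹ : R2) * EuclideanDomain.gcdB α (star α), ?_⟩
  have h1 : (↑u⁻¹ : R2) * ↑u = 1 := by exact_mod_cast u.inv_mul
  calc (↑u⁻¹ : R2) * EuclideanDomain.gcdA α (star α) * α +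
      (↑u⁻¹ : R2) * EuclideanDomain.gcdB α (star α) * star α
      = (↑u⁻¹ : R2) * (α * EuclideanDomain.gcdA α (star α) +
        star α * EuclideanDomain.gcdB α (star α)) := by ring
    _ = (↑u⁻¹ : R2) * EuclideanDomain.gcd α (star α) := by rw [← hb]
    _ = (↑u⁻¹ : R2) * ↑u := by rw [hu]
    _ = 1 := h1

theorem prime_of_norm_prime {π : R2} (hp : π.norm.natAbs.Prime) : Prime π := by
  rw [← irreducible_iff_prime]
  constructor
  · intro hu
    have h1 := Zsqrtd.norm_eq_one_iff.2 hu
    have := hp.one_lt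
    omega
  · intro a b hab
    by_contra hcon
    push_neg at hcon
    obtain ⟨ha, hb⟩ := hcon
    have h1 : a.norm.natAbs * b.norm.natAbs = π.norm.natAbs := by
      rw [← Int.natAbs_mul, ← Zsqrtd.norm_mul, ← hab]
    have h2 : a.norm.natAbs ≠ 1 := fun h => ha (Zsqrtd.norm_eq_one_iff.1 h)
    have h3 : b.norm.natAbs ≠ 1 := fun h => hb (Zsqrtd.norm_eq_one_iff.1 h)
    rcases hp.eq_one_or_self_of_dvd a.norm.natAbs ⟨b.norm.natAbs, h1.symm⟩ with h | h
    · exact h2 h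
    · rw [h] at h1
      exact h3 (Nat.eq_of_mul_eq_mul_left hp.pos (by rw [h1, mul_one]))

end Main

end Z2

namespace Z2

section Main2

variable {n : ℕ}

theorem star_dvd {a b : R2} (h : a ∣ b) : star a ∣ star b := by
  obtain ⟨c, rfl⟩ := h
  exact ⟨star c, by rw [star_mul']⟩

theorem exists_norm_eq_prime {p : ℕ} (hp : p.Prime) (hdvd : (p : ℤ) ∣ 2 * (n : ℤ) ^ 2 + 1) :
    ∃ π : R2, π.norm = p ∧ Prime π ∧ π ∣ ((p : ℤ) : R2) := by
  have hp2 : (2 : ℤ) ≤ (p : ℤ) := by exact_mod_cast hp.two_le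
  have hnp : ¬ Prime (((p : ℤ)) : R2) := by
    intro hpr
    have hcast : ((4 * (n : ℤ) ^ 2 + 2 : ℤ) : R2) = ⟨4 * (n : ℤ) ^ 2 + 2, 0⟩ := by
      ext <;> simp only [Zsqrtd.re_intCast, Zsqrtd.im_intCast]
    have hmul : (⟨2 * (n : ℤ), 1⟩ : R2) * ⟨2 * (n : ℤ), -1⟩ = ((4 * (n : ℤ) ^ 2 + 2 : ℤ) : R2) := by
      rw [hcast]; ext <;> simp [Zsqrtd.re_mul, Zsqrtd.im_mul] <;> ring
    have h1 : ((p : ℤ) : R2) ∣ (⟨2 * (n : ℤ), 1⟩ : R2) * ⟨2 * (n : ℤ), -1⟩ := by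
      rw [hmul, Zsqrtd.intCast_dvd_intCast]
      obtain ⟨k, hk⟩ := hdvd
      exact ⟨2 * k, by rw [show (4 : ℤ) * (n:ℤ)^2 + 2 = 2 * (2 * (n:ℤ)^2 + 1) by ring, hk]; ring⟩
    rcases hpr.2.2 _ _ h1 with h | h
    · have h2 := ((Zsqrtd.intCast_dvd _ _).1 h).2
      simp only at h2
      have := Int.le_of_dvd one_pos h2
      omega
    · have h2 := ((Zsqrtd.intCast_dvd _ _).1 h).2
      simp only at h2
      rw [Int.dvd_neg] at h2
      have := Int.le_of_dvd one_pos h2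
      omega
  have hnu : ¬ IsUnit (((p : ℤ)) : R2) := by
    intro h
    have h1 := (Zsqrtd.norm_eq_one_iff' (by norm_num) _).2 h
    rw [Zsqrtd.norm_intCast] at h1
    nlinarith
  have hirr : ¬ Irreducible (((p : ℤ)) : R2) := fun h => hnp (h.prime)
  rw [irreducible_iff] at hirr
  push_neg at hirr
  obtain ⟨a, b, hab, hua, hub⟩ := hirr hnu
  have h1 : a.norm.natAbs * b.norm.natAbs = p ^ 2 := by
    rw [← Int.natAbs_mul, ← Zsqrtd.norm_mul, ← hab, Zsqrtd.norm_intCast, Int.natAbs_mul,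
      Int.natAbs_natCast, sq]
  have h2 : a.norm.natAbs ≠ 1 := fun h => hua (Zsqrtd.norm_eq_one_iff.1 h)
  have h3 : b.norm.natAbs ≠ 1 := fun h => hub (Zsqrtd.norm_eq_one_iff.1 h)
  have h4 : a.norm.natAbs = p ∧ b.norm.natAbs = p := (hp.mul_eq_prime_sq_iff h2 h3).1 h1
  refine ⟨a, ?_, prime_of_norm_prime (h4.1 ▸ hp), ⟨b, hab⟩⟩
  rw [← h4.1, Int.natAbs_of_nonneg (norm_nonneg' a)]

theorem exists_prime_divisor {z : R2} (hza : z.norm ∣ 2 * (n : ℤ) ^ 2 + 1) {p : ℕ}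
    (hp : p.Prime) (hdvd : (p : ℤ) ∣ z.norm) : ∃ π : R2, π ∣ z ∧ π.norm = p := by
  obtain ⟨π, hπn, hπp, hπd⟩ := exists_norm_eq_prime (n := n) hp (hdvd.trans hza)
  have h1 : ((p : ℤ) : R2) ∣ ((z.norm : ℤ) : R2) := (Zsqrtd.intCast_dvd_intCast _ _).2 hdvd
  have h2 : ((z.norm : ℤ) : R2) = z * star z := Zsqrtd.norm_eq_mul_conj z
  rcases hπp.2.2 _ _ (h2 ▸ (hπd.trans h1)) with h | h
  · exact ⟨π, h, hπn⟩
  · refine ⟨star π, ?_, by rw [Zsqrtd.norm_conj]; exact hπn⟩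
    obtain ⟨c, hc⟩ := h
    exact ⟨star c, by rw [← star_star z, hc, star_mul']⟩

theorem exists_divisor_of_norm_dvd :
    ∀ (d : ℕ) (z : R2), z.norm ∣ 2 * (n : ℤ) ^ 2 + 1 → (d : ℤ) ∣ z.norm →
      ∃ γ : R2, γ ∣ z ∧ γ.norm = d := by
  intro d
  induction d using Nat.strong_induction_on with
  | _ d ih =>
    intro z hza hdvd
    rcases eq_or_ne d 1 with rfl | hd1
    · exact ⟨1, one_dvd _, Zsqrtd.norm_one⟩
    rcases Nat.eq_zero_or_pos d with rfl | hdpos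
    · exfalso
      have h0 : z.norm = 0 := by simpa using hdvd
      rw [h0] at hza
      obtain ⟨k, hk⟩ := hza
      set t := (n : ℤ) ^ 2
      omega
    obtain ⟨p, hp, hpd⟩ := Nat.exists_prime_and_dvd hd1
    have hpz : (p : ℤ) ∣ z.norm := dvd_trans (by exact_mod_cast Int.natCast_dvd_natCast.2 hpd) hdvd
    obtain ⟨π, hπz, hπn⟩ := exists_prime_divisor hza hp hpz
    obtain ⟨w, rfl⟩ := hπz
    obtain ⟨e, rfl⟩ := hpd
    have hpnez : (p : ℤ) ≠ 0 := by exact_mod_cast hp.pos.ne'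
    have hnormmul : (π * w).norm = (p : ℤ) * w.norm := by rw [Zsqrtd.norm_mul, hπn]
    have he : (e : ℤ) ∣ w.norm := by
      have h1 : (p : ℤ) * e ∣ (p : ℤ) * w.norm := by
        rw [← hnormmul]
        exact_mod_cast (by push_cast at hdvd ⊢; exact hdvd : ((p : ℤ) * e ∣ (π * w).norm))
      exact (mul_dvd_mul_iff_left hpnez).1 h1
    have hwa : w.norm ∣ 2 * (n : ℤ) ^ 2 + 1 :=
      dvd_trans ⟨π.norm, by rw [Zsqrtd.norm_mul]; ring⟩ hza
    have he0 : 0 < e := Nat.pos_of_ne_zero (fun h => by rw [h, mul_zero] at hdpos; omega)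
    have hel : e < p * e := by
      have h2 := hp.one_lt
      calc e = 1 * e := (one_mul e).symm
      _ < p * e := Nat.mul_lt_mul_of_lt_of_le h2 le_rfl he0
    obtain ⟨γ, hγw, hγn⟩ := ih e hel w hwa he
    exact ⟨π * γ, mul_dvd_mul_left π hγw, by rw [Zsqrtd.norm_mul, hπn, hγn]; push_cast; ring⟩

theorem assoc_of_dvd_alpha_eq_norm (hn : 0 < n) {γ₁ γ₂ : R2} (h1 : γ₁ ∣ alpha n)
    (h2 : γ₂ ∣ alpha n) (hnorm : γ₁.norm = γ₂.norm) : Associated γ₁ γ₂ := by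
  have hco := isCoprime_alpha (n := n) hn
  have hc1 : IsCoprime γ₁ (star γ₂) :=
    (hco.of_isCoprime_of_dvd_left h1).of_isCoprime_of_dvd_right (star_dvd h2)
  have hc2 : IsCoprime γ₂ (star γ₁) :=
    (hco.of_isCoprime_of_dvd_left h2).of_isCoprime_of_dvd_right (star_dvd h1)
  have key1 : γ₁ ∣ γ₂ * star γ₂ := by
    rw [← Zsqrtd.norm_eq_mul_conj, ← hnorm, Zsqrtd.norm_eq_mul_conj]
    exact Dvd.intro _ rfl
  have key2 : γ₂ ∣ γ₁ * star γ₁ := by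
    rw [← Zsqrtd.norm_eq_mul_conj, hnorm, Zsqrtd.norm_eq_mul_conj]
    exact Dvd.intro _ rfl
  exact associated_of_dvd_dvd (hc1.dvd_of_dvd_mul_right key1) (hc2.dvd_of_dvd_mul_right key2)

theorem exists_decomp {β : R2} (hβ : β.norm = (alpha n).norm) :
    ∃ γ δ : R2, γ ∣ alpha n ∧ δ ∣ star (alpha n) ∧ β = γ * δ := by
  have h : β ∣ alpha n * star (alpha n) := by
    rw [← Zsqrtd.norm_eq_mul_conj, ← hβ, Zsqrtd.norm_eq_mul_conj]
    exact Dvd.intro _ rfl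
  obtain ⟨γ, δ, hγ, hδ, rfl⟩ := exists_dvd_and_dvd_of_dvd_mul h
  exact ⟨γ, δ, hγ, hδ, rfl⟩

theorem gamma_assoc_of_eq (hn : 0 < n) {γ δ γ' δ' : R2} (hγ : γ ∣ alpha n)
    (hδ : δ ∣ star (alpha n)) (hγ' : γ' ∣ alpha n) (hδ' : δ' ∣ star (alpha n))
    (h : γ * δ = γ' * δ') : Associated γ γ' := by
  have hco := isCoprime_alpha (n := n) hn
  have hc1 : IsCoprime γ (star (alpha n)) := hco.of_isCoprime_of_dvd_left hγ
  have hc1' : IsCoprime γ δ' := hc1.of_isCoprime_of_dvd_right hδ'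
  have hc2 : IsCoprime γ' δ := (hco.of_isCoprime_of_dvd_left hγ').of_isCoprime_of_dvd_right hδ
  have d1 : γ ∣ γ' * δ' := h ▸ dvd_mul_right γ δ
  have d2 : γ' ∣ γ * δ := h.symm ▸ dvd_mul_right γ' δ'
  exact associated_of_dvd_dvd (hc1'.dvd_of_dvd_mul_right d1) (hc2.dvd_of_dvd_mul_right d2)

theorem key_inj (hn : 0 < n) {β β' γ δ γ' δ' : R2}
    (hβ : β.norm = (alpha n).norm) (hγ : γ ∣ alpha n) (hδ : δ ∣ star (alpha n))
    (h : β = γ * δ) (hγ' : γ' ∣ alpha n) (hδ' : δ' ∣ star (alpha n)) (h' : β' = γ' * δ')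
    (hβ' : β'.norm = (alpha n).norm)
    (hd : γ.norm = γ'.norm) : β' = β ∨ β' = -β := by
  have hβ0 : β ≠ 0 := by
    intro h0
    rw [h0, Zsqrtd.norm_zero] at hβ
    exact alpha_ne_zero (norm_eq_zero'.1 hβ.symm)
  have hγ0 : γ.norm ≠ 0 := by
    intro h0
    rw [h, Zsqrtd.norm_mul, h0, zero_mul] at hβ
    exact alpha_ne_zero (norm_eq_zero'.1 hβ.symm)
  have hassoc : Associated γ γ' := assoc_of_dvd_alpha_eq_norm hn hγ hγ' hd
  have hδd : δ.norm = δ'.norm := by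
    have e1 : γ.norm * δ.norm = γ'.norm * δ'.norm := by
      rw [← Zsqrtd.norm_mul, ← Zsqrtd.norm_mul, ← h, ← h', hβ, hβ']
    rw [← hd] at e1
    exact mul_left_cancel₀ hγ0 e1
  have hδcase : δ' = δ ∨ δ' = -δ := by
    have h1 : star δ ∣ alpha n := by
      have := star_dvd hδ
      rwa [star_star] at this
    have h2 : star δ' ∣ alpha n := by
      have := star_dvd hδ'
      rwa [star_star] at this
    have h3 : (star δ).norm = (star δ').norm := by
      rw [Zsqrtd.norm_conj, Zsqrtd.norm_conj, hδd]
    rcases eq_or_neg_of_associated (assoc_of_dvd_alpha_eq_norm hn h1 h2 h3) with h4 | h4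
    · left
      have := congrArg star h4
      rwa [star_star, star_star] at this
    · right
      have := congrArg star h4
      rwa [star_star, star_neg, star_star] at this
  rcases eq_or_neg_of_associated hassoc with h5 | h5 <;> rcases hδcase with h6 | h6
  · left; rw [h', h5, h6, h]
  · right; rw [h', h5, h6, h]; ring
  · right; rw [h', h5, h6, h]; ring
  · left; rw [h', h5, h6, h]; ring

end Main2

end Z2

namespace Z2

theorem natAbs_norm_decomp (β : R2) :
    β.norm.natAbs = β.re.natAbs ^ 2 + 2 * β.im.natAbs ^ 2 := by
  have h := norm_def' β
  have h2 : (β.norm.natAbs : ℤ) = β.re * β.re + 2 * (β.im * β.im) := by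
    rw [Int.natAbs_of_nonneg (norm_nonneg' β)]; exact h
  have h3 : ((β.re.natAbs ^ 2 + 2 * β.im.natAbs ^ 2 : ℕ) : ℤ)
      = β.re * β.re + 2 * (β.im * β.im) := by
    push_cast [Nat.cast_natAbs]
    rw [sq_abs, sq_abs]; ring
  exact_mod_cast h2.trans h3.symm

theorem four_cases {β β' : R2} (h1 : β.re.natAbs = β'.re.natAbs)
    (h2 : β.im.natAbs = β'.im.natAbs) :
    β' = β ∨ β' = -β ∨ β' = star β ∨ β' = -star β := by
  rcases Int.natAbs_eq_natAbs_iff.1 h1.symm with hre | hre <;>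
    rcases Int.natAbs_eq_natAbs_iff.1 h2.symm with him | him
  · left; ext <;> simp [hre, him]
  · right; right; left; ext <;> simp [hre, him]
  · right; right; right; ext <;> simp [hre, him]
  · right; left; ext <;> simp [hre, him]

section Main3

variable {n : ℕ}

theorem norm_alpha_natAbs (n : ℕ) : (alpha n).norm.natAbs = 2 * n ^ 2 + 1 := by
  have h : (alpha n).norm = ((2 * n ^ 2 + 1 : ℕ) : ℤ) := by
    rw [norm_alpha]; push_cast; ring
  rw [h, Int.natAbs_natCast]

open scoped Classical in
noncomputable def betaOf (n d : ℕ) : R2 :=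
  if h : ∃ γ : R2, γ ∣ alpha n ∧ γ.norm = d then
    h.choose * star (exists_eq_mul_right_of_dvd h.choose_spec.1).choose
  else 0

theorem betaOf_spec {d : ℕ} (hex : ∃ γ : R2, γ ∣ alpha n ∧ γ.norm = d) :
    ∃ γ δ : R2, γ ∣ alpha n ∧ δ ∣ star (alpha n) ∧ betaOf n d = γ * δ ∧ γ.norm = d ∧
      (betaOf n d).norm = (alpha n).norm := by
  rw [betaOf, dif_pos hex]
  obtain ⟨hγ, hγn⟩ := hex.choose_spec
  set γ := hex.choose
  have hc := (exists_eq_mul_right_of_dvd hγ).choose_spec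
  set c := (exists_eq_mul_right_of_dvd hγ).choose
  refine ⟨γ, star c, hγ, star_dvd (Dvd.intro_left γ hc.symm), rfl, hγn, ?_⟩
  rw [Zsqrtd.norm_mul, Zsqrtd.norm_conj, ← Zsqrtd.norm_mul, ← hc]

theorem betaOf_eq_or (hn : 0 < n) {β γ δ : R2} (hβ : β.norm = (alpha n).norm)
    (hγ : γ ∣ alpha n) (hδ : δ ∣ star (alpha n)) (hdecomp : β = γ * δ) {d : ℕ}
    (hd : γ.norm = d) : betaOf n d = β ∨ betaOf n d = -β := by
  have hex : ∃ γ' : R2, γ' ∣ alpha n ∧ γ'.norm = d := ⟨γ, hγ, hd⟩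
  obtain ⟨γ', δ', hγ', hδ', hBdecomp, hd', hBnorm⟩ := betaOf_spec hex
  exact key_inj hn hβ hγ hδ hdecomp hγ' hδ' hBdecomp hBnorm (by rw [hd, hd'])

theorem lt_of_sq_le {x N : ℕ} (h : x ^ 2 ≤ N) (h2 : 2 ≤ N) : x < N := by
  rcases Nat.lt_or_ge x 2 with h3 | h3
  · omega
  · have h4 : x < x ^ 2 := by nlinarith
    omega

/-- The central bijection: pairs (x,y) with x²+2y² = N correspond to divisors d ≤ √N. -/
theorem card_pairs_eq_card_divisors (hn : 0 < n) :
    (((2 * n ^ 2 + 1).divisors.filter (fun d => d * d ≤ 2 * n ^ 2 + 1)).card : ℕ)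
      = ((Finset.range (2 * n ^ 2 + 1) ×ˢ Finset.range (2 * n ^ 2 + 1)).filter
          (fun p => p.1 ^ 2 + 2 * p.2 ^ 2 = 2 * n ^ 2 + 1)).card := by
  classical
  set N : ℕ := 2 * n ^ 2 + 1 with hN
  have hN3 : 3 ≤ N := by nlinarith
  have hNint : (alpha n).norm = (N : ℤ) := by rw [norm_alpha, hN]; push_cast; ring
  have hexd : ∀ d : ℕ, d ∣ N → ∃ γ : R2, γ ∣ alpha n ∧ γ.norm = d := by
    intro d hd
    apply exists_divisor_of_norm_dvd d (alpha n)
    · rw [norm_alpha]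
    · rw [hNint]
      exact Int.natCast_dvd_natCast.2 hd
  apply Finset.card_bij (fun d _ => ((betaOf n d).re.natAbs, (betaOf n d).im.natAbs))
  · -- maps into target
    intro d hd
    simp only [Finset.mem_filter, Nat.mem_divisors] at hd
    obtain ⟨⟨hdN, -⟩, hdsq⟩ := hd
    obtain ⟨γ, δ, hγ, hδ, hdec, hγn, hBnorm⟩ := betaOf_spec (hexd d hdN)
    have hsum : (betaOf n d).re.natAbs ^ 2 + 2 * (betaOf n d).im.natAbs ^ 2 = N := by
      rw [← natAbs_norm_decomp, hBnorm, hNint, Int.natAbs_natCast]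
    simp only [Finset.mem_filter, Finset.mem_product, Finset.mem_range]
    refine ⟨⟨lt_of_sq_le (by omega) (by omega),
      lt_of_sq_le (by nlinarith [hsum]) (by omega)⟩, hsum⟩
  · -- injective
    intro d₁ hd₁ d₂ hd₂ heq
    simp only [Finset.mem_filter, Nat.mem_divisors] at hd₁ hd₂
    obtain ⟨⟨hdN₁, hN0⟩, hdsq₁⟩ := hd₁
    obtain ⟨⟨hdN₂, -⟩, hdsq₂⟩ := hd₂
    obtain ⟨γ₁, δ₁, hγ₁, hδ₁, hdec₁, hγn₁, hBnorm₁⟩ := betaOf_spec (hexd d₁ hdN₁)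
    obtain ⟨γ₂, δ₂, hγ₂, hδ₂, hdec₂, hγn₂, hBnorm₂⟩ := betaOf_spec (hexd d₂ hdN₂)
    have h1 : (betaOf n d₁).re.natAbs = (betaOf n d₂).re.natAbs := congrArg Prod.fst heq
    have h2 : (betaOf n d₁).im.natAbs = (betaOf n d₂).im.natAbs := congrArg Prod.snd heq
    have hprod : γ₁.norm * δ₁.norm = (N : ℤ) := by
      rw [← Zsqrtd.norm_mul, ← hdec₁, hBnorm₁, hNint]
    have hd₁pos : 0 < d₁ := Nat.pos_of_dvd_of_pos hdN₁ (by omega)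
    have hd₂pos : 0 < d₂ := Nat.pos_of_dvd_of_pos hdN₂ (by omega)
    rcases four_cases h1 h2 with hc | hc | hc | hc
    · have := gamma_assoc_of_eq hn hγ₂ hδ₂ hγ₁ hδ₁ (by rw [← hdec₂, ← hdec₁, hc])
      have hne := Zsqrtd.norm_eq_of_associated (by norm_num) this
      rw [hγn₂, hγn₁] at hne
      exact_mod_cast hne.symm
    · have := gamma_assoc_of_eq hn hγ₂ hδ₂ hγ₁ ((neg_dvd).2 hδ₁)
        (by rw [← hdec₂, hc, hdec₁]; ring)
      have hne := Zsqrtd.norm_eq_of_associated (by norm_num) this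
      rw [hγn₂, hγn₁] at hne
      exact_mod_cast hne.symm
    · have hsd : star δ₁ ∣ alpha n := by
        have := star_dvd hδ₁; rwa [star_star] at this
      have hassoc : Associated γ₂ (star δ₁) :=
        gamma_assoc_of_eq hn hγ₂ hδ₂ hsd (star_dvd hγ₁)
          (by rw [← hdec₂, hc, hdec₁, star_mul']; ring)
      have hne := Zsqrtd.norm_eq_of_associated (by norm_num) hassoc
      rw [hγn₂, Zsqrtd.norm_conj] at hne
      have hprodnat : d₁ * d₂ = N := by
        have h5 : (d₁ : ℤ) * (d₂ : ℤ) = (N : ℤ) := by rw [← hγn₁, hne]; exact hprod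
        exact_mod_cast h5
      have ha : d₁ ≤ d₂ := Nat.le_of_mul_le_mul_left (hdsq₁.trans_eq hprodnat.symm) hd₁pos
      have hb : d₂ ≤ d₁ := by
        have h8 : d₂ * d₂ ≤ d₁ * d₂ := hdsq₂.trans_eq hprodnat.symm
        rw [mul_comm d₁ d₂] at h8
        exact Nat.le_of_mul_le_mul_left h8 hd₂pos
      omega
    · have hsd : star δ₁ ∣ alpha n := by
        have := star_dvd hδ₁; rwa [star_star] at this
      have hassoc : Associated γ₂ (star δ₁) :=
        gamma_assoc_of_eq hn hγ₂ hδ₂ hsd ((neg_dvd).2 (star_dvd hγ₁))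
          (by rw [← hdec₂, hc, hdec₁, star_mul']; ring)
      have hne := Zsqrtd.norm_eq_of_associated (by norm_num) hassoc
      rw [hγn₂, Zsqrtd.norm_conj] at hne
      have hprodnat : d₁ * d₂ = N := by
        have h5 : (d₁ : ℤ) * (d₂ : ℤ) = (N : ℤ) := by rw [← hγn₁, hne]; exact hprod
        exact_mod_cast h5
      have ha : d₁ ≤ d₂ := Nat.le_of_mul_le_mul_left (hdsq₁.trans_eq hprodnat.symm) hd₁pos
      have hb : d₂ ≤ d₁ := by
        have h8 : d₂ * d₂ ≤ d₁ * d₂ := hdsq₂.trans_eq hprodnat.symm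
        rw [mul_comm d₁ d₂] at h8
        exact Nat.le_of_mul_le_mul_left h8 hd₂pos
      omega
  · -- surjective
    intro p hp
    obtain ⟨x, y⟩ := p
    simp only [Finset.mem_filter, Finset.mem_product, Finset.mem_range] at hp
    obtain ⟨-, hpsum⟩ := hp
    have hβnorm : (⟨(x : ℤ), (y : ℤ)⟩ : R2).norm = (alpha n).norm := by
      rw [norm_def', hNint]
      show (x : ℤ) * (x : ℤ) + 2 * ((y : ℤ) * (y : ℤ)) = (N : ℤ)
      have h6 : ((x ^ 2 + 2 * y ^ 2 : ℕ) : ℤ) = (N : ℤ) :=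
        congrArg (Nat.cast : ℕ → ℤ) hpsum
      have hNZ : (N : ℤ) = 2 * (n : ℤ) ^ 2 + 1 := by rw [hN]; push_cast; ring
      push_cast at h6
      linear_combination h6
    obtain ⟨γ, δ, hγ, hδ, hdec⟩ := exists_decomp hβnorm
    have hγnn : γ.norm = (γ.norm.natAbs : ℤ) := (Int.natAbs_of_nonneg (norm_nonneg' γ)).symm
    have hδnn : δ.norm = (δ.norm.natAbs : ℤ) := (Int.natAbs_of_nonneg (norm_nonneg' δ)).symm
    set e := γ.norm.natAbs with he
    set f := δ.norm.natAbs with hf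
    have hefN : e * f = N := by
      have h7 : ((e * f : ℕ) : ℤ) = (N : ℤ) := by
        push_cast
        rw [← hγnn, ← hδnn, ← Zsqrtd.norm_mul, ← hdec, hβnorm, hNint, hN]
      exact_mod_cast h7
    have hepos : 0 < e := by
      rcases Nat.eq_zero_or_pos e with h | h
      · rw [h, zero_mul] at hefN; omega
      · exact h
    have hfpos : 0 < f := by
      rcases Nat.eq_zero_or_pos f with h | h
      · rw [h, mul_zero] at hefN; omega
      · exact h
    have hpair : ∀ β : R2, (β = (⟨(x : ℤ), (y : ℤ)⟩ : R2) ∨ β = -(⟨(x : ℤ), (y : ℤ)⟩ : R2) ∨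
        β = star (⟨(x : ℤ), (y : ℤ)⟩ : R2) ∨ β = -star (⟨(x : ℤ), (y : ℤ)⟩ : R2)) →
        (β.re.natAbs, β.im.natAbs) = (x, y) := by
      rintro β (rfl | rfl | rfl | rfl) <;> simp
    rcases le_or_gt (e * e) N with hcase | hcase
    · refine ⟨e, ?_, ?_⟩
      · simp only [Finset.mem_filter, Nat.mem_divisors]
        exact ⟨⟨⟨f, hefN.symm⟩, by omega⟩, hcase⟩
      · rcases betaOf_eq_or hn hβnorm hγ hδ hdec hγnn with h | h
        · exact hpair _ (Or.inl h)
        · exact hpair _ (Or.inr (Or.inl h))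
    · refine ⟨f, ?_, ?_⟩
      · simp only [Finset.mem_filter, Nat.mem_divisors]
        have hfe : f ≤ e := by
          by_contra hcon
          push_neg at hcon
          have h9 : e * e ≤ e * f := Nat.mul_le_mul_left e hcon.le
          rw [hefN] at h9
          omega
        have hff : f * f ≤ N := by
          calc f * f ≤ e * f := Nat.mul_le_mul_right f hfe
          _ = N := hefN
        exact ⟨⟨⟨e, by rw [← hefN]; ring⟩, by omega⟩, hff⟩
      · have hsd : star δ ∣ alpha n := by
          have := star_dvd hδ; rwa [star_star] at this
        have hstardec : star (⟨(x : ℤ), (y : ℤ)⟩ : R2) = star δ * star γ := by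
          rw [hdec, star_mul']; ring
        have hstarnorm : (star (⟨(x : ℤ), (y : ℤ)⟩ : R2)).norm = (alpha n).norm := by
          rw [Zsqrtd.norm_conj, hβnorm]
        have hsdnorm : (star δ).norm = (f : ℤ) := by rw [Zsqrtd.norm_conj, hδnn]
        rcases betaOf_eq_or hn hstarnorm hsd (star_dvd hγ) hstardec hsdnorm with h | h
        · exact hpair _ (Or.inr (Or.inr (Or.inl h)))
        · exact hpair _ (Or.inr (Or.inr (Or.inr h)))

end Main3

end Z2

theorem divisor_count (N : ℕ) (hN : 0 < N) :
    N.divisors.card + (N.divisors.filter (fun d => d * d = N)).card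
      = 2 * (N.divisors.filter (fun d => d * d ≤ N)).card := by
  classical
  set A := N.divisors.filter (fun d => d * d < N) with hA
  set B := N.divisors.filter (fun d => N < d * d) with hB
  set C := N.divisors.filter (fun d => d * d = N) with hC
  have hAB : A.card = B.card := by
    apply Finset.card_bij (fun d _ => N / d)
    · intro d hd
      rw [hA, Finset.mem_filter, Nat.mem_divisors] at hd
      obtain ⟨⟨hdvd, hN0⟩, hlt⟩ := hd
      have hdpos : 0 < d := Nat.pos_of_dvd_of_pos hdvd hN
      obtain ⟨e, he⟩ := hdvd
      have hepos : 0 < e := by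
        rcases Nat.eq_zero_or_pos e with h | h
        · rw [h, mul_zero] at he; omega
        · exact h
      have hquot : N / d = e := by rw [he]; exact Nat.mul_div_cancel_left e hdpos
      rw [hB, Finset.mem_filter, Nat.mem_divisors]
      refine ⟨⟨⟨d, by rw [hquot, he]; ring⟩, hN0⟩, ?_⟩
      rw [hquot]
      have h1 : d < e := by
        have h2 : d * d < d * e := by rw [← he]; exact hlt
        exact Nat.lt_of_mul_lt_mul_left h2
      calc N = d * e := he
      _ < e * e := (Nat.mul_lt_mul_right hepos).2 h1
    · intro d₁ h₁ d₂ h₂ heq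
      rw [hA, Finset.mem_filter, Nat.mem_divisors] at h₁ h₂
      have e₁ : N / (N / d₁) = d₁ := Nat.div_div_self h₁.1.1 h₁.1.2
      have e₂ : N / (N / d₂) = d₂ := Nat.div_div_self h₂.1.1 h₂.1.2
      rw [← e₁, ← e₂, heq]
    · intro b hb
      rw [hB, Finset.mem_filter, Nat.mem_divisors] at hb
      obtain ⟨⟨hdvd, hN0⟩, hlt⟩ := hb
      have hbpos : 0 < b := Nat.pos_of_dvd_of_pos hdvd hN
      obtain ⟨e, he⟩ := hdvd
      have hepos : 0 < e := by
        rcases Nat.eq_zero_or_pos e with h | h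
        · rw [h, mul_zero] at he; omega
        · exact h
      have hquot : N / b = e := by rw [he]; exact Nat.mul_div_cancel_left e hbpos
      have hmem : e ∈ A := by
        rw [hA, Finset.mem_filter, Nat.mem_divisors]
        refine ⟨⟨⟨b, by rw [he]; ring⟩, hN0⟩, ?_⟩
        have h1 : e < b := by
          have h2 : b * e < b * b := by rw [← he]; exact hlt
          exact Nat.lt_of_mul_lt_mul_left h2
        calc e * e < e * b := (Nat.mul_lt_mul_left hepos).2 h1
        _ = N := by rw [he]; ring
      refine ⟨e, hmem, ?_⟩
      have : N / e = b := by rw [he, mul_comm]; exact Nat.mul_div_cancel_left b hepos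
      exact this
  have hsplit1 : N.divisors.card = A.card + (N.divisors.filter (fun d => ¬ d * d < N)).card :=
    (Finset.card_filter_add_card_filter_not (p := fun d => d * d < N)).symm
  have hsplit2 : N.divisors.filter (fun d => ¬ d * d < N) = B ∪ C := by
    ext d
    simp only [Finset.mem_filter, Finset.mem_union, hB, hC]
    constructor
    · rintro ⟨hd, hnl⟩
      rcases Nat.lt_or_ge N (d * d) with h | h
      · exact Or.inl ⟨hd, h⟩
      · exact Or.inr ⟨hd, Nat.le_antisymm h (Nat.le_of_not_lt hnl)⟩
    · rintro (⟨hd, h⟩ | ⟨hd, h⟩)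
      · exact ⟨hd, fun hc => Nat.lt_asymm h hc⟩
      · exact ⟨hd, by rw [h]; exact lt_irrefl N⟩
  have hdisjBC : Disjoint B C := by
    rw [Finset.disjoint_left]
    intro d hdB hdC
    rw [hB, Finset.mem_filter] at hdB
    rw [hC, Finset.mem_filter] at hdC
    rw [hdC.2] at hdB
    exact lt_irrefl N hdB.2
  have hdisjAC : Disjoint A C := by
    rw [Finset.disjoint_left]
    intro d hdA hdC
    rw [hA, Finset.mem_filter] at hdA
    rw [hC, Finset.mem_filter] at hdC
    rw [hdC.2] at hdA
    exact lt_irrefl N hdA.2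
  have hsplit3 : N.divisors.filter (fun d => d * d ≤ N) = A ∪ C := by
    ext d
    simp only [Finset.mem_filter, Finset.mem_union, hA, hC]
    constructor
    · rintro ⟨hd, hle⟩
      rcases Nat.lt_or_ge (d * d) N with h | h
      · exact Or.inl ⟨hd, h⟩
      · exact Or.inr ⟨hd, Nat.le_antisymm hle h⟩
    · rintro (⟨hd, h⟩ | ⟨hd, h⟩)
      · exact ⟨hd, Nat.le_of_lt h⟩
      · exact ⟨hd, Nat.le_of_eq h⟩
  rw [hsplit1, hsplit2, hsplit3, Finset.card_union_of_disjoint hdisjBC,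
    Finset.card_union_of_disjoint hdisjAC, hAB]
  ring

theorem stmt_4 (n : ℕ) (hn : 0 < n) :
    rmt 3 1 n = ((2 * n ^ 2 + 1).divisors.card - 1) / 2 := by
  classical
  have hpoly : ∀ c : ℤ, ((1 : ℕ) : ℤ) * polygonal ((3 : ℕ) : ℤ) c = c * (c + 1) / 2 := by
    intro c
    unfold polygonal
    norm_num
  -- Step A : rewrite the rmt set
  set P : Set (ℕ × ℕ) := {p : ℕ × ℕ | 0 < p.1 ∧ p.1 ≤ p.2 ∧ p.1 + p.2 = n ∧
    ∃ c : ℤ, 0 < c ∧ (p.1 : ℤ) * p.2 = c * (c + 1) / 2} with hP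
  have hrmt : rmt 3 1 n = P.ncard := by
    rw [rmt]
    congr 1
    ext p
    simp only [hP, Set.mem_setOf_eq]
    constructor
    · rintro ⟨h1, h2, h3, c, hc, h4⟩
      exact ⟨h1, h2, h3, c, hc (by norm_num), by rw [h4, hpoly]⟩
    · rintro ⟨h1, h2, h3, c, hc, h4⟩
      exact ⟨h1, h2, h3, c, fun _ => hc, by rw [hpoly]; exact h4⟩
  set T : Set (ℕ × ℕ) := {p : ℕ × ℕ | p.1 ^ 2 + 2 * p.2 ^ 2 = 2 * n ^ 2 + 1 ∧ p.2 < n} with hT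
  set f : ℕ × ℕ → ℕ × ℕ := fun p => (Nat.sqrt (8 * p.1 * p.2 + 1), p.2 - p.1) with hf
  -- Step B : f is a bijection from P to T
  have himg : f '' P = T := by
    apply Set.Subset.antisymm
    · rintro ⟨u, v⟩ ⟨⟨a, b⟩, ⟨ha, hab, habn, c, hc, heq⟩, hfeq⟩
      simp only [hf, Prod.mk.injEq] at hfeq
      obtain ⟨hu, hv⟩ := hfeq
      -- c(c+1) = 2ab
      have hc2 : c * (c + 1) = 2 * ((a : ℤ) * b) := by
        obtain ⟨k, hk⟩ := Int.even_mul_succ_self c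
        have hk2 : c * (c + 1) = 2 * k := by rw [hk]; ring
        rw [hk2, Int.mul_ediv_cancel_left _ (by norm_num)] at heq
        rw [hk2, heq]
      have hx : (2 * c + 1) ^ 2 = 8 * (a : ℤ) * b + 1 := by linear_combination 4 * hc2
      have hctoNat : (((2 * c + 1).toNat : ℤ)) = 2 * c + 1 := Int.toNat_of_nonneg (by omega)
      have h10 : 8 * a * b + 1 = (2 * c + 1).toNat ^ 2 := by
        have h11 : ((8 * a * b + 1 : ℕ) : ℤ) = (((2 * c + 1).toNat ^ 2 : ℕ) : ℤ) := by
          push_cast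
          rw [hctoNat]
          linear_combination -hx
        exact_mod_cast h11
      have hu' : u = (2 * c + 1).toNat := by rw [← hu, h10, Nat.sqrt_eq']
      constructor
      · -- the equation
        have goalZ : (u : ℤ) ^ 2 + 2 * ((v : ℕ) : ℤ) ^ 2 = 2 * (n : ℤ) ^ 2 + 1 := by
          have hvz : ((v : ℕ) : ℤ) = (b : ℤ) - (a : ℤ) := by
            rw [← hv]
            push_cast [Nat.cast_sub hab]
            ring
          have hnz : (n : ℤ) = (a : ℤ) + b := by exact_mod_cast habn.symm
          rw [hu', hctoNat, hvz, hnz]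
          linear_combination hx
        exact_mod_cast goalZ
      · -- v < n
        show v < n
        omega
    · rintro ⟨x, y⟩ ⟨hxy, hyn⟩
      have hN' : x ^ 2 + 2 * y ^ 2 = 2 * n ^ 2 + 1 := hxy
      -- x is odd
      have hxodd : x % 2 = 1 := by
        rcases Nat.even_or_odd x with ⟨k, hk⟩ | hodd
        · exfalso
          have h12 : x ^ 2 = 4 * (k * k) := by rw [hk]; ring
          have heven : Even (2 * n ^ 2 + 1) := by
            rw [← hN', h12]
            exact ⟨2 * (k * k) + y ^ 2, by ring⟩
          rw [Nat.even_add_one] at heven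
          exact heven (even_two_mul _)
        · exact Nat.odd_iff.1 hodd
      obtain ⟨c, hc⟩ : ∃ c, x = 2 * c + 1 := ⟨x / 2, by omega⟩
      have hxne1 : x ≠ 1 := by
        intro h1
        rw [h1] at hN'
        have hysq : y ^ 2 = n ^ 2 := by
          have h2 : (1 : ℕ) ^ 2 = 1 := one_pow 2
          linarith
        have : y = n := by
          rw [← Nat.sqrt_eq' y, hysq, Nat.sqrt_eq']
        omega
      have hcpos : 0 < c := by omega
      have h13 : x ^ 2 = 4 * (c * c) + 4 * c + 1 := by rw [hc]; ring
      have h14 : n ^ 2 = y ^ 2 + 2 * (c * c) + 2 * c := by linarith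
      have hpar2 : Even n ↔ Even y := by
        have e1 : Even (n ^ 2) ↔ Even n := by
          rw [Nat.even_pow]; simp
        have e2 : Even (y ^ 2) ↔ Even y := by
          rw [Nat.even_pow]; simp
        rw [← e1, ← e2, h14,
          show y ^ 2 + 2 * (c * c) + 2 * c = y ^ 2 + (2 * (c * c) + 2 * c) by ring,
          Nat.even_add]
        have heven : Even (2 * (c * c) + 2 * c) := ⟨c * c + c, by ring⟩
        simp [heven]
      have hyeven : Even (n - y) := (Nat.even_sub hyn.le).2 (by tauto)
      obtain ⟨a, ha2⟩ := hyeven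
      have hapos : 0 < a := by omega
      set b := a + y with hb
      have hnya : n = y + 2 * a := by omega
      have h15 : n ^ 2 = y ^ 2 + 4 * (a * y) + 4 * (a * a) := by rw [hnya]; ring
      have h16 : c * (c + 1) = 2 * (a * b) := by
        have h17 : a * b = a * a + a * y := by rw [hb]; ring
        have h18 : c * (c + 1) = c * c + c := by ring
        rw [h17, h18]
        linarith
      refine ⟨(a, b), ⟨hapos, by omega, by omega, (c : ℤ), by exact_mod_cast hcpos, ?_⟩, ?_⟩
      · -- product equation
        show (a : ℤ) * b = (c : ℤ) * ((c : ℤ) + 1) / 2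
        have h19 : ((c : ℤ)) * ((c : ℤ) + 1) = 2 * ((a : ℤ) * b) := by exact_mod_cast h16
        rw [h19, Int.mul_ediv_cancel_left _ (by norm_num)]
      · -- f value
        have h20 : 8 * a * b + 1 = x * x := by
          have h21 : x * x = 4 * (c * (c + 1)) + 1 := by rw [hc]; ring
          rw [h21, h16]
          ring
        simp only [hf, Prod.mk.injEq]
        constructor
        · rw [h20, Nat.sqrt_eq]
        · omega
  have hinj : Set.InjOn f P := by
    rintro ⟨a, b⟩ ⟨ha, hab, habn, -⟩ ⟨a', b'⟩ ⟨ha', hab', habn', -⟩ heq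
    simp only [hf, Prod.mk.injEq] at heq
    obtain ⟨-, h2⟩ := heq
    have : a = a' ∧ b = b' := by omega
    simp [this.1, this.2]
  -- Step C : counting
  set F1 := (Finset.range (2 * n ^ 2 + 1) ×ˢ Finset.range (2 * n ^ 2 + 1)).filter
    (fun p => p.1 ^ 2 + 2 * p.2 ^ 2 = 2 * n ^ 2 + 1) with hF1
  have hSset : {p : ℕ × ℕ | p.1 ^ 2 + 2 * p.2 ^ 2 = 2 * n ^ 2 + 1} = ↑F1 := by
    ext ⟨x, y⟩
    simp only [Set.mem_setOf_eq, hF1, Finset.coe_filter, Finset.mem_product,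
      Finset.mem_range, Set.mem_setOf_eq]
    constructor
    · intro h
      refine ⟨⟨Z2.lt_of_sq_le (by omega) (by nlinarith), Z2.lt_of_sq_le (by nlinarith) (by nlinarith)⟩, h⟩
    · exact fun h => h.2
  have hins : {p : ℕ × ℕ | p.1 ^ 2 + 2 * p.2 ^ 2 = 2 * n ^ 2 + 1} = insert ((1 : ℕ), n) T := by
    ext ⟨x, y⟩
    simp only [Set.mem_setOf_eq, Set.mem_insert_iff, hT, Prod.mk.injEq]
    constructor
    · intro h
      rcases lt_trichotomy y n with hy | hy | hy
      · exact Or.inr ⟨h, hy⟩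
      · left
        refine ⟨?_, hy⟩
        subst hy
        have hx1 : x ^ 2 = 1 := by linarith
        rw [← Nat.sqrt_eq' x, hx1]
        rfl
      · exfalso
        have h22 : (n + 1) ^ 2 ≤ y ^ 2 := Nat.pow_le_pow_left hy 2
        have h23 : (n + 1) ^ 2 = n ^ 2 + 2 * n + 1 := by ring
        nlinarith [h, h22, h23]
    · rintro (⟨rfl, rfl⟩ | ⟨h, -⟩)
      · ring
      · exact h
  have hnotmem : ((1 : ℕ), n) ∉ T := by simp [hT]
  have hTfin : T.Finite := by
    apply Set.Finite.subset (F1.finite_toSet)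
    intro p hp
    rw [← hSset]
    exact hp.1
  have h5 : (insert ((1 : ℕ), n) T).ncard = T.ncard + 1 := Set.ncard_insert_of_notMem hnotmem hTfin
  have h6 : F1.card = T.ncard + 1 := by
    rw [← Set.ncard_coe_finset, ← hSset, hins, h5]
  have h7 := Z2.card_pairs_eq_card_divisors hn
  have h8 := divisor_count (2 * n ^ 2 + 1) (by positivity)
  have hC1 : ((2 * n ^ 2 + 1).divisors.filter (fun d => d * d = 2 * n ^ 2 + 1)).card ≤ 1 := by
    apply Finset.card_le_one.2
    intro a ha b hb
    rw [Finset.mem_filter] at ha hb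
    exact Nat.mul_self_inj.1 (ha.2.trans hb.2.symm)
  have hd1 : 1 ≤ (2 * n ^ 2 + 1).divisors.card :=
    Finset.card_pos.2 ⟨1, Nat.one_mem_divisors.2 (by positivity)⟩
  have hfinal : rmt 3 1 n = T.ncard := by
    rw [hrmt, ← himg, Set.ncard_image_of_injOn hinj]
  rw [hfinal]
  -- now pure arithmetic
  rw [← hF1] at h7
  omega
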